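/- Every K_3-free graph is star 2-choosable; that is, for every triangle-free graph G and every 2-list assignment L of G, there exists an L-coloring of G in which no maximal star is monochromatic. -/

import Mathlib

variable {V : Type*}

/-- A set of vertices is monochromatic under the coloring `ρ`. -/
def Mono (ρ : V → ℕ) (W : Set V) : Prop := ∀ x ∈ W, ∀ y ∈ W, ρ x = ρ y

/-- `S` is an independent set of `G`. -/
def IndepSet (G : SimpleGraph V) (S : Set V) : Prop := ∀ x ∈ S, ∀ y ∈ S, ¬G.Adj x y

/-- `W` is a star of `G` with center `v` (it induces a `K_{1,m}` with `m ≥ 1`). -/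
def IsStarC (G : SimpleGraph V) (v : V) (W : Set V) : Prop :=
  v ∈ W ∧ (W \ {v}).Nonempty ∧ (∀ u ∈ W \ {v}, G.Adj v u) ∧ IndepSet G (W \ {v})

/-- `W` is a star of `G`. -/
def IsStar (G : SimpleGraph V) (W : Set V) : Prop := ∃ v, IsStarC G v W

/-- `W` is a maximal star of `G`. -/
def IsMaxStar (G : SimpleGraph V) (W : Set V) : Prop :=
  IsStar G W ∧ ∀ W', IsStar G W' → W ⊆ W' → W' = W

/-- `W` is a biclique of `G` (it induces a complete bipartite graph). -/
def IsBiclique (G : SimpleGraph V) (W : Set V) : Prop :=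
  ∃ S T : Set V, S.Nonempty ∧ T.Nonempty ∧ Disjoint S T ∧ S ∪ T = W ∧
    (∀ s ∈ S, ∀ t ∈ T, G.Adj s t) ∧ IndepSet G S ∧ IndepSet G T

/-- `W` is a maximal biclique of `G`. -/
def IsMaxBiclique (G : SimpleGraph V) (W : Set V) : Prop :=
  IsBiclique G W ∧ ∀ W', IsBiclique G W' → W ⊆ W' → W' = W

/-- A star coloring: no maximal star is monochromatic. -/
def StarColoring (G : SimpleGraph V) (ρ : V → ℕ) : Prop :=
  ∀ W, IsMaxStar G W → ¬Mono ρ W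

/-- A biclique coloring: no maximal biclique is monochromatic. -/
def BicliqueColoring (G : SimpleGraph V) (ρ : V → ℕ) : Prop :=
  ∀ W, IsMaxBiclique G W → ¬Mono ρ W

/-- A star `k`-coloring uses colors `{1, …, k}`. -/
def StarKColoring (G : SimpleGraph V) (k : ℕ) (ρ : V → ℕ) : Prop :=
  (∀ x, ρ x ∈ Set.Icc 1 k) ∧ StarColoring G ρ

/-- A biclique `k`-coloring uses colors `{1, …, k}`. -/
def BicliqueKColoring (G : SimpleGraph V) (k : ℕ) (ρ : V → ℕ) : Prop :=
  (∀ x, ρ x ∈ Set.Icc 1 k) ∧ BicliqueColoring G ρ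

/-- A `k`-list assignment: each vertex gets a list of exactly `k` colors. -/
def IsListAssignment (L : V → Set ℕ) (k : ℕ) : Prop := ∀ v, (L v).Finite ∧ (L v).ncard = k

/-- An `L`-coloring: each vertex gets a color from its own list. -/
def IsLColoring (L : V → Set ℕ) (ρ : V → ℕ) : Prop := ∀ v, ρ v ∈ L v

/-- `G` is star `k`-choosable. -/
def StarChoosable (G : SimpleGraph V) (k : ℕ) : Prop :=
  ∀ L : V → Set ℕ, IsListAssignment L k → ∃ ρ, IsLColoring L ρ ∧ StarColoring G ρ

/-- `G` is biclique `k`-choosable. -/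
def BicliqueChoosable (G : SimpleGraph V) (k : ℕ) : Prop :=
  ∀ L : V → Set ℕ, IsListAssignment L k → ∃ ρ, IsLColoring L ρ ∧ BicliqueColoring G ρ

/-- The star chromatic number `χ_S`. -/
noncomputable def starChromaticNumber (G : SimpleGraph V) : ℕ :=
  sInf {k | ∃ ρ, StarKColoring G k ρ}

/-- The biclique chromatic number `χ_B`. -/
noncomputable def bicliqueChromaticNumber (G : SimpleGraph V) : ℕ :=
  sInf {k | ∃ ρ, BicliqueKColoring G k ρ}

/-- The star choice number `ch_S`. -/
noncomputable def starChoiceNumber (G : SimpleGraph V) : ℕ := sInf {k | StarChoosable G k}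

/-- The biclique choice number `ch_B`. -/
noncomputable def bicliqueChoiceNumber (G : SimpleGraph V) : ℕ := sInf {k | BicliqueChoosable G k}

/-- `l` is a leaf (degree-one vertex) whose unique neighbor is `v`. -/
def IsLeafAt (G : SimpleGraph V) (l v : V) : Prop := G.neighborSet l = {v}

/-- `v` is a leafed vertex: some leaf is adjacent to it. -/
def IsLeafed (G : SimpleGraph V) (v : V) : Prop := ∃ l, IsLeafAt G l v

/-- `S` induces a cycle `C_n` in `G`. -/
def IsInducedCycle (G : SimpleGraph V) (n : ℕ) (S : Set V) : Prop :=
  ∃ f : ZMod n → V, Function.Injective f ∧ Set.range f = S ∧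
    ∀ i j : ZMod n, G.Adj (f i) (f j) ↔ (j = i + 1 ∨ i = j + 1)

/-- `S` induces a hole (chordless cycle of length at least 4) in `G`. -/
def IsHole (G : SimpleGraph V) (S : Set V) : Prop := ∃ n, 4 ≤ n ∧ IsInducedCycle G n S

/-- `S` induces a complete graph `K_m` in `G`. -/
def IsInducedComplete (G : SimpleGraph V) (m : ℕ) (S : Set V) : Prop :=
  G.IsClique S ∧ S.Finite ∧ S.ncard = m

/-- The closed neighborhood `N[v]`. -/
def closedNbhd (G : SimpleGraph V) (v : V) : Set V := insert v (G.neighborSet v)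

/-- `v` and `w` are twins: `N[v] = N[w]`. -/
def Twins (G : SimpleGraph V) (v w : V) : Prop := closedNbhd G v = closedNbhd G w

/-- `w` and `z` are twins in the subgraph of `G` induced by `A`. -/
def TwinsIn (G : SimpleGraph V) (A : Set V) (w z : V) : Prop :=
  ∀ y ∈ A, ((y = w ∨ G.Adj y w) ↔ (y = z ∨ G.Adj y z))

/-- `w` dominates `v`: `N[v] ⊆ N[w]`. -/
def Dominates (G : SimpleGraph V) (w v : V) : Prop := closedNbhd G v ⊆ closedNbhd G w

/-- `K` is a `k`-keeper connecting `v` and `w`. -/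
def IsKeeper (G : SimpleGraph V) (k : ℕ) (v w : V) (K : Set V) : Prop :=
  v ∉ K ∧ w ∉ K ∧
  ∃ (d : Fin (k - 1) → V) (C : Fin (k - 1) → Set V),
    Function.Injective d ∧
    (∀ i, (C i).Finite ∧ (C i).ncard = k) ∧
    (∀ i j, d i ∉ C j) ∧
    (∀ i j, i ≠ j → Disjoint (C i) (C j)) ∧
    K = Set.range d ∪ ⋃ i, C i ∧
    G.IsClique (Set.range d ∪ {v, w}) ∧
    (∀ i, G.IsClique (insert (d i) (C i))) ∧
    (∀ x ∈ K, ∀ y, G.Adj x y →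
      (x ∈ Set.range d ∧ y ∈ Set.range d ∪ {v, w}) ∨
      (∃ i, x ∈ insert (d i) (C i) ∧ y ∈ insert (d i) (C i)))

/-- `C` is a `k`-switcher connecting `U`. -/
def IsSwitcher (G : SimpleGraph V) (k : ℕ) (U C : Set V) : Prop :=
  Disjoint C U ∧ C.Finite ∧ C.ncard = k ∧
  (∀ u ∈ U, G.IsClique (insert u C)) ∧
  (∀ x ∈ C, ∀ y, G.Adj x y → y ∈ C ∪ U)

/-- `S` is a long `k`-switcher connecting `W`. -/
def IsLongSwitcher (G : SimpleGraph V) (k : ℕ) (W S : Set V) : Prop :=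
  ∃ (h : ℕ) (w u : ℕ → V) (C : Set V) (Q : ℕ → Set V),
    2 ≤ h ∧
    Set.InjOn w (Set.Icc 1 h) ∧ w '' Set.Icc 1 h = W ∧
    Set.InjOn u (Set.Icc 1 h) ∧
    (∀ i ∈ Set.Icc 1 h, IsLeafed G (u i)) ∧
    IndepSet G (u '' Set.Icc 1 h) ∧
    IsSwitcher G k (u '' Set.Icc 1 h) C ∧
    (∀ i ∈ Set.Icc 1 h, IsKeeper G k (w i) (u i) (Q i)) ∧
    S = u '' Set.Icc 1 h ∪ C ∪ ⋃ i ∈ Set.Icc 1 h, Q i ∧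
    Disjoint (u '' Set.Icc 1 h) C ∧
    (∀ i ∈ Set.Icc 1 h, Disjoint (u '' Set.Icc 1 h) (Q i)) ∧
    (∀ i ∈ Set.Icc 1 h, Disjoint C (Q i)) ∧
    (∀ i ∈ Set.Icc 1 h, ∀ j ∈ Set.Icc 1 h, i ≠ j → Disjoint (Q i) (Q j)) ∧
    Disjoint S W ∧
    (∀ i ∈ Set.Icc 1 h, ∀ y, G.Adj (u i) y → y ∈ C ∪ Q i ∨ IsLeafAt G y (u i))

/-- `K` is an `ℓ`-cluster connecting `⟨s, X, −X⟩`, where `X = range x` and `−X = range mx`. -/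
def IsCluster (G : SimpleGraph V) (ℓ : ℕ) (s : V) (x mx : ZMod ℓ → V) (K : Set V) : Prop :=
  2 ≤ ℓ ∧
  ∃ vc : ZMod ℓ → V,
    Function.Injective x ∧ Function.Injective mx ∧ Function.Injective vc ∧
    Set.range vc = K ∧
    Disjoint (Set.range x) (Set.range mx) ∧
    Disjoint (Set.range x) K ∧ Disjoint (Set.range mx) K ∧
    s ∉ Set.range x ∪ Set.range mx ∪ K ∧
    (∀ i, IsLeafed G (vc i)) ∧
    (∀ i, G.Adj s (x i)) ∧ (∀ i, G.Adj s (mx i)) ∧ (∀ i, G.Adj s (vc i)) ∧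
    (∀ i, G.Adj (x i) (mx i)) ∧ (∀ i, G.Adj (mx i) (vc i)) ∧ (∀ i, G.Adj (vc i) (x (i + 1))) ∧
    (∀ i j, ¬G.Adj (x i) (x j)) ∧ (∀ i j, ¬G.Adj (mx i) (mx j)) ∧
    (∀ i j, ¬G.Adj (vc i) (vc j)) ∧
    (∀ i j, G.Adj (x i) (mx j) → i = j) ∧
    (∀ i j, G.Adj (mx i) (vc j) → i = j) ∧
    (∀ i j, G.Adj (vc i) (x j) → j = i + 1) ∧
    (∀ i, ∀ y, G.Adj (vc i) y → y = s ∨ y = mx i ∨ y = x (i + 1) ∨ IsLeafAt G y (vc i))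

/-- `S` is a list switcher connecting `W`. -/
def IsListSwitcher (G : SimpleGraph V) (W S : Set V) : Prop :=
  ∃ (h : ℕ) (w u : ℕ → V) (C : Set V),
    2 ≤ h ∧
    Set.InjOn w (Set.Icc 1 h) ∧ w '' Set.Icc 1 h = W ∧
    Set.InjOn u (Set.Icc 1 h) ∧
    IndepSet G (u '' Set.Icc 1 h) ∧
    IsSwitcher G 2 (u '' Set.Icc 1 h) C ∧
    S = u '' Set.Icc 1 h ∪ C ∧
    Disjoint (u '' Set.Icc 1 h) C ∧
    Disjoint S W ∧
    (∀ i ∈ Set.Icc 1 h, G.Adj (w i) (u i)) ∧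
    (∀ i ∈ Set.Icc 1 h, ∀ y, G.Adj (u i) y → y ∈ C ∨ y = w i)

/-- `F` is a `k`-forcer connecting `v`. -/
def IsForcer (G : SimpleGraph V) (k : ℕ) (v : V) (F : Set V) : Prop :=
  ∃ (A B : Set V) (C : V → V → Set V),
    A.Finite ∧ A.ncard = k - 1 ∧ B.Finite ∧ B.ncard = k ^ k - 1 ∧
    (∀ a ∈ A, IsLeafed G a) ∧ (∀ b ∈ B, IsLeafed G b) ∧
    v ∉ A ∧ v ∉ B ∧ Disjoint A B ∧
    (∀ a ∈ insert v A, ∀ b ∈ B, ¬G.Adj a b ∧ IsSwitcher G k {a, b} (C a b)) ∧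
    (∀ a ∈ insert v A, ∀ b ∈ B, ∀ a' ∈ insert v A, ∀ b' ∈ B,
      (a ≠ a' ∨ b ≠ b') → Disjoint (C a b) (C a' b')) ∧
    (∀ a ∈ insert v A, ∀ b ∈ B, Disjoint (C a b) (insert v (A ∪ B))) ∧
    F = A ∪ B ∪ ⋃ a ∈ insert v A, ⋃ b ∈ B, C a b ∧
    (∀ x ∈ A ∪ B, ∀ y, G.Adj x y →
      (∃ a ∈ insert v A, ∃ b ∈ B, (x = a ∨ x = b) ∧ y ∈ C a b) ∨ IsLeafAt G y x)

/-- Given a `k`-forcer `F` connecting `v` and a list assignment `L`, the color `c` is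
`L`-admissible for `v`. -/
def LAdmissible (G : SimpleGraph V) (F : Set V) (L : V → Set ℕ) (v : V) (c : ℕ) : Prop :=
  c ∈ L v ∧ ∃ ρ : V → ℕ, IsLColoring L ρ ∧ ρ v = c ∧
    ∀ f ∈ F, ∀ W, IsMaxStar G W → IsStarC G f W → ¬Mono ρ W

/-- The vertices `a, b, c, d` induce a diamond with universal vertices `a, b`. -/
def IsInducedDiamond (G : SimpleGraph V) (a b c d : V) : Prop :=
  a ≠ b ∧ a ≠ c ∧ a ≠ d ∧ b ≠ c ∧ b ≠ d ∧ c ≠ d ∧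
  G.Adj a b ∧ G.Adj a c ∧ G.Adj a d ∧ G.Adj b c ∧ G.Adj b d ∧ ¬G.Adj c d

/-- `G` contains an induced 4-wheel `W_4`. -/
def HasInducedW4 (G : SimpleGraph V) : Prop :=
  ∃ u a b c d : V, [u, a, b, c, d].Pairwise (· ≠ ·) ∧
    G.Adj u a ∧ G.Adj u b ∧ G.Adj u c ∧ G.Adj u d ∧
    G.Adj a b ∧ G.Adj b c ∧ G.Adj c d ∧ G.Adj d a ∧ ¬G.Adj a c ∧ ¬G.Adj b d

/-- `G` contains an induced dart. -/
def HasInducedDart (G : SimpleGraph V) : Prop :=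
  ∃ a b c d e : V, [a, b, c, d, e].Pairwise (· ≠ ·) ∧
    IsInducedDiamond G a b c d ∧ G.Adj a e ∧ ¬G.Adj b e ∧ ¬G.Adj c e ∧ ¬G.Adj d e

/-- `G` contains an induced gem. -/
def HasInducedGem (G : SimpleGraph V) : Prop :=
  ∃ u p₁ p₂ p₃ p₄ : V, [u, p₁, p₂, p₃, p₄].Pairwise (· ≠ ·) ∧
    G.Adj u p₁ ∧ G.Adj u p₂ ∧ G.Adj u p₃ ∧ G.Adj u p₄ ∧
    G.Adj p₁ p₂ ∧ G.Adj p₂ p₃ ∧ G.Adj p₃ p₄ ∧ ¬G.Adj p₁ p₃ ∧ ¬G.Adj p₁ p₄ ∧ ¬G.Adj p₂ p₄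

/-- `v` is block separable. -/
def BlockSeparable (G : SimpleGraph V) (v : V) : Prop :=
  ∀ w ∈ G.neighborSet v, ∀ z ∈ G.neighborSet v, G.Adj w z →
    ¬Dominates G w v → ¬Dominates G z v → TwinsIn G (closedNbhd G v) w z

/-- `B` is a block (a maximal set of pairwise twins) of the subgraph of `G` induced by `A`. -/
def IsBlockOf (G : SimpleGraph V) (A B : Set V) : Prop :=
  B ⊆ A ∧ B.Nonempty ∧ (∀ p ∈ B, ∀ q ∈ B, TwinsIn G A p q) ∧
  ∀ B', B' ⊆ A → (∀ p ∈ B', ∀ q ∈ B', TwinsIn G A p q) → B ⊆ B' → B' = B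

/-- `B` is a block of `G`. -/
def IsBlock (G : SimpleGraph V) (B : Set V) : Prop := IsBlockOf G Set.univ B

/-- `B 0, …, B ℓ` is the block separation of `v`. -/
def IsBlockSeparation (G : SimpleGraph V) (v : V) (ℓ : ℕ) (B : ℕ → Set V) : Prop :=
  v ∈ B 0 ∧
  (∀ i ≤ ℓ, IsBlockOf G (closedNbhd G v) (B i)) ∧
  (∀ i ≤ ℓ, ∀ j ≤ ℓ, i ≠ j → Disjoint (B i) (B j)) ∧
  (⋃ i ∈ Set.Iic ℓ, B i) = closedNbhd G v ∧
  (∀ i, 1 ≤ i → i ≤ ℓ → ∀ j, 1 ≤ j → j ≤ ℓ → i ≠ j → ∀ a ∈ B i, ∀ b ∈ B j, ¬G.Adj a b)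

/-- `S` is a diamond `k`-switcher connecting `U`. -/
def IsDiamondSwitcher (G : SimpleGraph V) (k : ℕ) (U S : Set V) : Prop :=
  ∃ (h : ℕ) (u w : ℕ → V) (Q : ℕ → Set V) (C : Set V),
    2 ≤ h ∧
    Set.InjOn u (Set.Icc 1 h) ∧ u '' Set.Icc 1 h = U ∧
    Set.InjOn w (Set.Icc 1 h) ∧
    (∀ i, 2 ≤ i → i ≤ h → IsLeafed G (w i)) ∧
    C.Finite ∧ C.ncard = k ∧
    G.IsClique (insert (w 1) C) ∧
    (∀ i, 2 ≤ i → i ≤ h → G.Adj (w 1) (w i)) ∧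
    (∀ i j, 2 ≤ i → i ≤ h → 2 ≤ j → j ≤ h → ¬G.Adj (w i) (w j)) ∧
    (∀ i ∈ Set.Icc 1 h, IsKeeper G k (u i) (w i) (Q i)) ∧
    S = w '' Set.Icc 1 h ∪ C ∪ ⋃ i ∈ Set.Icc 1 h, Q i ∧
    Disjoint (w '' Set.Icc 1 h) C ∧
    (∀ i ∈ Set.Icc 1 h, Disjoint (w '' Set.Icc 1 h) (Q i)) ∧
    (∀ i ∈ Set.Icc 1 h, Disjoint C (Q i)) ∧
    (∀ i ∈ Set.Icc 1 h, ∀ j ∈ Set.Icc 1 h, i ≠ j → Disjoint (Q i) (Q j)) ∧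
    Disjoint S U ∧
    (∀ y, G.Adj (w 1) y → y ∈ C ∨ (∃ i, 2 ≤ i ∧ i ≤ h ∧ y = w i) ∨ y ∈ Q 1) ∧
    (∀ i, 2 ≤ i → i ≤ h → ∀ y, G.Adj (w i) y → y = w 1 ∨ y ∈ Q i ∨ IsLeafAt G y (w i)) ∧
    (∀ x ∈ C, ∀ y, G.Adj x y → y ∈ C ∨ y = w 1)

/-- `S` is a split `k`-switcher connecting `W`, with respect to the split partition
`(Sg, Qg)` of `G`. -/
def IsSplitSwitcher (G : SimpleGraph V) (Sg Qg : Set V) (k : ℕ) (W S : Set V) : Prop :=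
  ∃ (X Y : Set V) (a₁ a₂ : V),
    X ⊆ Qg ∧ Y ⊆ Qg ∧ a₁ ∈ Sg ∧ a₂ ∈ Sg ∧ a₁ ≠ a₂ ∧
    X.Finite ∧ X.ncard = k ∧ Y.Finite ∧ Y.ncard = k ∧ Disjoint X Y ∧
    a₁ ∉ X ∪ Y ∧ a₂ ∉ X ∪ Y ∧
    S = X ∪ Y ∪ {a₁, a₂} ∧ Disjoint S W ∧
    (∀ v ∈ W ∪ {a₁, a₂}, G.IsClique (insert v X)) ∧
    G.IsClique (insert a₁ Y) ∧ G.IsClique (insert a₂ Y) ∧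
    (∀ x ∈ X ∪ Y, ∀ y ∈ Sg, G.Adj x y →
      ((x ∈ X ∧ (y ∈ W ∨ y = a₁ ∨ y = a₂)) ∨ (x ∈ Y ∧ (y = a₁ ∨ y = a₂)))) ∧
    (∀ y, G.Adj a₁ y → y ∈ X ∪ Y) ∧
    (∀ y, G.Adj a₂ y → y ∈ X ∪ Y)

/-- `G` together with the vertex partition `QB 1, …, QB (r+1), SB 1, …, SB r` realizes the
threshold representation `(q, s)`. -/
def IsThresholdRealization (G : SimpleGraph V) (r : ℕ) (q s : ℕ → ℕ)
    (QB SB : ℕ → Set V) : Prop :=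
  (∀ i ∈ Set.Icc 1 (r + 1), (QB i).Finite ∧ (QB i).ncard = q i) ∧
  (∀ i ∈ Set.Icc 1 r, (SB i).Finite ∧ (SB i).ncard = s i) ∧
  (∀ i ∈ Set.Icc 1 (r + 1), ∀ j ∈ Set.Icc 1 (r + 1), i ≠ j → Disjoint (QB i) (QB j)) ∧
  (∀ i ∈ Set.Icc 1 r, ∀ j ∈ Set.Icc 1 r, i ≠ j → Disjoint (SB i) (SB j)) ∧
  (∀ i ∈ Set.Icc 1 (r + 1), ∀ j ∈ Set.Icc 1 r, Disjoint (QB i) (SB j)) ∧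
  ((⋃ i ∈ Set.Icc 1 (r + 1), QB i) ∪ ⋃ i ∈ Set.Icc 1 r, SB i) = Set.univ ∧
  (∀ a b : V, G.Adj a b ↔ a ≠ b ∧
    ((∃ i ∈ Set.Icc 1 (r + 1), ∃ j ∈ Set.Icc 1 (r + 1),
        ((a ∈ QB i ∧ b ∈ QB j) ∨ (b ∈ QB i ∧ a ∈ QB j))) ∨
     (∃ i ∈ Set.Icc 1 r, ∃ j ∈ Set.Icc 1 r, i ≤ j ∧
        ((a ∈ QB i ∧ b ∈ SB j) ∨ (b ∈ QB i ∧ a ∈ SB j)))))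

/-- The index `i` of `Q` is `k`-forbidden for the threshold representation `(q, s)`. -/
def KForbiddenIndex (k r : ℕ) (q s : ℕ → ℕ) (i : ℕ) : Prop :=
  k < q i ∨ (q i = k ∧ ∃ j, i < j ∧ j ≤ r + 1 ∧ q j = k ∧
    (∀ h, i < h → h < j → q h = k - 1) ∧ ∀ h, i ≤ h → h < j → s h = 1)

/-- `G` realizes the netblock representation `(T, wt)`, where `VT` is the vertex set of the
tree `T` and `B v w` is the clique inserted for the tree edge `vw`. -/
def IsNetblockRealization (G T : SimpleGraph V) (VT : Set V)
    (wt : V → V → ℕ) (B : V → V → Set V) : Prop :=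
  (∀ v w, T.Adj v w → v ∈ VT ∧ w ∈ VT) ∧
  (T.induce VT).IsTree ∧
  (∀ v w, wt v w = wt w v) ∧
  (∀ v w, B v w = B w v) ∧
  (∀ v w, T.Adj v w → (B v w).Finite ∧ (B v w).ncard = wt v w) ∧
  (∀ v w, T.Adj v w → Disjoint (B v w) VT) ∧
  (∀ v w v' w', T.Adj v w → T.Adj v' w' → ¬(v = v' ∧ w = w') → ¬(v = w' ∧ w = v') →
    Disjoint (B v w) (B v' w')) ∧
  {a | a ∈ VT ∨ ∃ v w, T.Adj v w ∧ a ∈ B v w} = Set.univ ∧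
  (∀ a b, G.Adj a b ↔ a ≠ b ∧ ∃ v w, T.Adj v w ∧
    a ∈ insert v (insert w (B v w)) ∧ b ∈ insert v (insert w (B v w)))

/-- `R` is the vertex set of a `k`-subtree of the netblock representation `(T, wt)`. -/
def IsKSubtree (T : SimpleGraph V) (VT : Set V) (wt : V → V → ℕ) (k : ℕ) (R : Set V) : Prop :=
  R ⊆ VT ∧ R.Nonempty ∧ (T.induce R).Connected ∧
  ∀ v ∈ R, ∀ w ∈ R, T.Adj v w → wt v w = k

/-- `R` is the vertex set of a maximal `k`-subtree of `(T, wt)`: its edge set is not properly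
included in the edge set of another `k`-subtree. -/
def IsMaxKSubtree (T : SimpleGraph V) (VT : Set V) (wt : V → V → ℕ) (k : ℕ) (R : Set V) :
    Prop :=
  IsKSubtree T VT wt k R ∧
  ∀ R', IsKSubtree T VT wt k R' →
    (∀ v ∈ R, ∀ w ∈ R, T.Adj v w → v ∈ R' ∧ w ∈ R') →
    (∀ v ∈ R', ∀ w ∈ R', T.Adj v w → v ∈ R ∧ w ∈ R)

/-- `v` is a `k`-exit vertex of `(T, wt)`. -/
def IsExitVertex (T : SimpleGraph V) (wt : V → V → ℕ) (k : ℕ) (v : V) : Prop :=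
  ∃ w, T.Adj v w ∧ wt v w < k

/-- Every triangle-free graph is star 2-choosable. -/
theorem triangleFree_star_two_choosable (G : SimpleGraph V) (hG : G.CliqueFree 3) :
    StarChoosable G 2 := by
  classical
  intro L hL
  -- extract the two colors of each list
  choose a b hab hLv using fun v => Set.ncard_eq_two.mp (hL v).2
  -- pick v c : an element of L v different from c
  set pick : V → ℕ → ℕ := fun v c => if a v = c then b v else a v with hpick
  have hpick_mem : ∀ v c, pick v c ∈ L v := by
    intro v c
    rw [hLv v]
    by_cases h : a v = c <;> simp [hpick, h]
  have hpick_ne : ∀ v c, pick v c ≠ c := by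
    intro v c
    by_cases h : a v = c
    · simpa [hpick, h] using fun hbc => hab v (h.trans hbc.symm)
    · simpa [hpick, h] using h
  -- roots of connected components
  set root : V → V := fun v => (G.connectedComponentMk v).out with hroot
  have hreach : ∀ v, G.Reachable (root v) v := by
    intro v
    have : G.connectedComponentMk (root v) = G.connectedComponentMk v :=
      Quot.out_eq _
    exact (SimpleGraph.ConnectedComponent.eq.mp this)
  have hrootadj : ∀ v u, G.Adj v u → root v = root u := by
    intro v u h
    have : G.connectedComponentMk v = G.connectedComponentMk u :=
      SimpleGraph.ConnectedComponent.eq.mpr h.reachable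
    simp only [hroot, this]
  set d : V → ℕ := fun v => G.dist (root v) v with hd
  have hd0 : ∀ v, d v = 0 → root v = v := by
    intro v h
    exact ((hreach v).dist_eq_zero_iff).mp h
  -- parent function
  have hpar : ∀ v, ∃ u, 0 < d v → G.Adj v u ∧ d u + 1 = d v ∧ root u = root v := by
    intro v
    by_cases h : 0 < d v
    · obtain ⟨p, hp⟩ := SimpleGraph.exists_walk_of_dist_ne_zero (G := G)
        (u := root v) (v := v) (Nat.pos_iff_ne_zero.mp h)
      -- reverse walk from v to root v of positive length; take first step
      have hp' : p.reverse.length = d v := by rw [SimpleGraph.Walk.length_reverse]; exact hp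
      have hvr : v ≠ root v := by
        intro he
        have hz : G.dist (root v) v = 0 := by rw [← he]; exact SimpleGraph.dist_self
        have hz' : d v = 0 := hz
        omega
      obtain ⟨u, hadj, q, hpr⟩ := SimpleGraph.Walk.exists_eq_cons_of_ne hvr p.reverse
      · refine ⟨u, fun _ => ⟨hadj, ?_, ?_⟩⟩
        · have hru : root u = root v := (hrootadj u v hadj.symm)
          have hlen : q.length + 1 = d v := by
            rw [hpr] at hp'; simpa using hp'
          have h1 : G.dist (root v) u ≤ q.length := by
            have := SimpleGraph.dist_le q.reverse
            simpa using this
          have h2 : d v ≤ G.dist (root v) u + 1 := by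
            have hrvu : G.Reachable (root v) u := (hreach v).trans hadj.reachable
            obtain ⟨w, hw⟩ := hrvu.exists_walk_length_eq_dist
            have := SimpleGraph.dist_le (w.concat hadj.symm)
            rw [SimpleGraph.Walk.length_concat, hw] at this
            exact this
          have heq : G.dist (root u) u = G.dist (root v) u := by rw [hru]
          simp only [hd] at hlen h2 ⊢
          rw [heq]
          omega
        · exact hrootadj u v hadj.symm
    · exact ⟨v, fun hc => absurd hc h⟩
  choose par hparspec using hpar
  -- recursive coloring by distance level
  set col : ℕ → V → ℕ := fun n => Nat.rec (motive := fun _ => V → ℕ)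
    (fun v => a v) (fun _ ih v => pick v (ih (par v))) n with hcol
  set ρ : V → ℕ := fun v => col (d v) v with hρ
  have hcolmem : ∀ n v, col n v ∈ L v := by
    intro n
    induction n with
    | zero => intro v; rw [hLv v]; simp [hcol]
    | succ n ih => intro v; exact hpick_mem v _
  have hρmem : ∀ v, ρ v ∈ L v := fun v => hcolmem _ v
  -- key: parent has a different color
  have hstep : ∀ v, 0 < d v → G.Adj v (par v) ∧ ρ v ≠ ρ (par v) := by
    intro v hv
    obtain ⟨hadj, hdd, hrr⟩ := hparspec v hv
    refine ⟨hadj, ?_⟩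
    obtain ⟨n, hn⟩ : ∃ n, d v = n + 1 := ⟨d v - 1, by omega⟩
    have hdp : d (par v) = n := by omega
    have h1 : ρ v = pick v (col n (par v)) := by
      simp only [hρ, hn]
      try rfl
    have h2 : ρ (par v) = col n (par v) := by
      simp only [hρ, hdp]
    rw [h1, h2]
    exact hpick_ne v _
  -- every non-isolated vertex has a neighbor of different color
  have hkey : ∀ v u₀, G.Adj v u₀ → ∃ u, G.Adj v u ∧ ρ u ≠ ρ v := by
    intro v u₀ h0
    by_cases hv : 0 < d v
    · obtain ⟨hadj, hne⟩ := hstep v hv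
      exact ⟨par v, hadj, fun he => hne he.symm⟩
    · have hvr : root v = v := hd0 v (by omega)
      have hru : root u₀ = v := by rw [← hrootadj v u₀ h0, hvr]
      have hdu : 0 < d u₀ := by
        rcases Nat.eq_zero_or_pos (d u₀) with h | h
        · exfalso
          have := hd0 u₀ h
          rw [hru] at this
          exact h0.ne this
        · exact h
      obtain ⟨hadj, hdd, hrr⟩ := hparspec u₀ hdu
      have hdu1 : d u₀ = 1 := by
        have : G.dist (root u₀) u₀ ≤ 1 := by
          rw [hru]
          have := SimpleGraph.dist_le h0.toWalk
          simpa using this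
        have hle : d u₀ ≤ 1 := this
        omega
      have hdp0 : d (par u₀) = 0 := by omega
      have : par u₀ = v := by
        have h1 := hd0 _ hdp0
        rw [hrr, hru] at h1
        exact h1.symm
      have hne := (hstep u₀ hdu).2
      rw [this] at hne
      exact ⟨u₀, h0, fun he => hne he⟩
  refine ⟨ρ, hρmem, ?_⟩
  -- structure of maximal stars in a triangle-free graph
  intro W hW hmono
  obtain ⟨⟨v, hvW, hWne, hWadj, _⟩, hmax⟩ := hW
  -- closed neighborhood is a star extending W
  have hNindep : IndepSet G (insert v (G.neighborSet v) \ {v}) := by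
    intro x hx y hy hxy
    simp only [Set.mem_diff, Set.mem_insert_iff, Set.mem_singleton_iff,
      SimpleGraph.mem_neighborSet] at hx hy
    have hvx : G.Adj v x := hx.1.resolve_left hx.2
    have hvy : G.Adj v y := hy.1.resolve_left hy.2
    exact hG {v, x, y} (SimpleGraph.is3Clique_triple_iff.mpr ⟨hvx, hvy, hxy⟩)
  have hstar : IsStar G (insert v (G.neighborSet v)) := by
    refine ⟨v, Set.mem_insert _ _, ?_, ?_, hNindep⟩
    · obtain ⟨u, hu⟩ := hWne
      have huv : G.Adj v u := hWadj u hu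
      refine ⟨u, ?_⟩
      simp only [Set.mem_diff, Set.mem_insert_iff, Set.mem_singleton_iff]
      exact ⟨Or.inr huv, fun h => G.irrefl (h ▸ huv)⟩
    · intro u hu
      simp only [Set.mem_diff, Set.mem_insert_iff, Set.mem_singleton_iff,
        SimpleGraph.mem_neighborSet] at hu
      exact hu.1.resolve_left hu.2
  have hWsub : W ⊆ insert v (G.neighborSet v) := by
    intro x hx
    by_cases hxv : x = v
    · exact hxv ▸ Set.mem_insert _ _
    · exact Set.mem_insert_of_mem _ (hWadj x ⟨hx, hxv⟩)
  have hWeq : insert v (G.neighborSet v) = W := hmax _ hstar hWsub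
  -- v has a neighbor, so find one with a different color
  obtain ⟨u₀, hu₀⟩ := hWne
  obtain ⟨u, huadj, hune⟩ := hkey v u₀ (hWadj u₀ hu₀)
  have huW : u ∈ W := by rw [← hWeq]; exact Set.mem_insert_of_mem _ huadj
  exact hune (hmono u huW v hvW)
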